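/- Let W : Fin d → Fin d → ℝ have all entries in [0,1] and let α ∈ (0,1]. Then for all nodes x, y, z: S̃_W^(1)(x,y|z) ≤ log 𝔼_{A∼Bern(W)}[S_A^(1)(x,y|z)] and C̃_W^(1)(x,y|z) ≤ log 𝔼_{A∼Bern(W)}[C_A^(1)(x,y|z)], where S_A^(1) and C_A^(1) are {0,1}-valued, the inequalities are in the extended reals, and log 0 = −∞. (Theorem 3.7, 1st-order inequalities.) -/

import Mathlib

open MeasureTheory
open scoped ENNReal

noncomputable section

/-- The reachability formula `R_A^(l)(x,y)`, defined recursively. -/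
def ReachF {d : ℕ} (A : Fin d → Fin d → Bool) : ℕ → Fin d → Fin d → Bool
  | 0, x, y => decide (x = y)
  | l + 1, x, y =>
      (decide (∃ u : Fin d, ReachF A l x u = true ∧ A u y = true)) || ReachF A l x y

/-- Bernoulli measure on `Bool` with parameter `p`. -/
def bernoulliMeasure (p : ℝ) : Measure Bool :=
  ENNReal.ofReal p • Measure.dirac true + ENNReal.ofReal (1 - p) • Measure.dirac false

instance (p : ℝ) : IsFiniteMeasure (bernoulliMeasure p) := by
  constructor
  have h : bernoulliMeasure p Set.univ = ENNReal.ofReal p + ENNReal.ofReal (1 - p) := by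
    simp [bernoulliMeasure]
  rw [h]
  exact ENNReal.add_lt_top.2 ⟨ENNReal.ofReal_lt_top, ENNReal.ofReal_lt_top⟩

/-- `Bern(W)`: the product over all pairs `(u, v)` of Bernoulli measures, under which
the coordinates `A u v` are independent with `ℙ(A u v = true) = W u v`. -/
def bernMeasure {d : ℕ} (W : Fin d → Fin d → ℝ) : Measure (Fin d → Fin d → Bool) :=
  Measure.pi fun u => Measure.pi fun v => bernoulliMeasure (W u v)

/-- Exponential on extended reals, with `exp (−∞) = 0` and `exp ⊤ = ⊤`. -/
def eexp (x : EReal) : ℝ≥0∞ :=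
  if x = ⊥ then 0 else if x = ⊤ then ⊤ else ENNReal.ofReal (Real.exp x.toReal)

/-- Logarithm on `ℝ≥0∞`, with `log 0 = −∞` and `log ⊤ = ⊤`. -/
def elog (x : ℝ≥0∞) : EReal :=
  if x = 0 then ⊥ else if x = ⊤ then ⊤ else ((Real.log x.toReal : ℝ) : EReal)

/-- LogMeanExp soft disjunction `T⊕_α` with temperature `α` over a finite family. -/
def softOr (α : ℝ) {ι : Type*} [Fintype ι] (x : ι → EReal) : EReal :=
  (α : EReal) * elog ((∑ i, eexp (((α⁻¹ : ℝ) : EReal) * x i)) / (Fintype.card ι : ℝ≥0∞))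

/-- Soft graph reachability `R̃_W^(l)`. -/
def softReach {d : ℕ} (α : ℝ) (W : Fin d → Fin d → ℝ) : ℕ → Fin d → Fin d → EReal
  | 0, x, y => if x = y then 0 else ⊥
  | l + 1, x, y =>
      softOr α
        (Fin.cons (softReach α W l x y)
          (fun u : Fin d => softReach α W l x u + elog (ENNReal.ofReal (W u y))) :
          Fin (d + 1) → EReal)

/-- Soft graph unreachability `Ũ_W^(l)`. -/
def softUnreach {d : ℕ} (α : ℝ) (W : Fin d → Fin d → ℝ) : ℕ → Fin d → Fin d → EReal
  | 0, x, y => if x ≠ y then 0 else ⊥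
  | l + 1, x, y =>
      (∑ u : Fin d,
        softOr α ![softUnreach α W l x u, elog (ENNReal.ofReal (1 - W u y))])
        + softUnreach α W l x y

/-- The 0th-order d-connection formula `C_A^(0)(x,y)`, using `R_A := R_A^(d)`. -/
def C0 {d : ℕ} (A : Fin d → Fin d → Bool) (x y : Fin d) : Bool :=
  decide (∃ a : Fin d, ReachF A d a x = true ∧ ReachF A d a y = true)

/-- The soft 0th-order d-separation score `S̃_W^(0)`. -/
def softS0 {d : ℕ} (α : ℝ) (W : Fin d → Fin d → ℝ) (x y : Fin d) : EReal :=
  ∑ a : Fin d, softOr α ![softUnreach α W d a x, softUnreach α W d a y]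

/-- The soft 0th-order d-connection score `C̃_W^(0)`. -/
def softC0 {d : ℕ} (α : ℝ) (W : Fin d → Fin d → ℝ) (x y : Fin d) : EReal :=
  softOr α (fun a : Fin d => softReach α W d a x + softReach α W d a y)
/-- The node-deleted graph `A₋z`. -/
def delNode {d : ℕ} (A : Fin d → Fin d → Bool) (z : Fin d) : Fin d → Fin d → Bool :=
  fun u v => A u v && decide (u ≠ z) && decide (v ≠ z)

/-- The node-deleted weight matrix `W₋z`. -/
def delW {d : ℕ} (W : Fin d → Fin d → ℝ) (z : Fin d) : Fin d → Fin d → ℝ :=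
  fun u v => if u ≠ z ∧ v ≠ z then W u v else 0

/-- The 1st-order d-connection formula `C_A^(1)(x,y∣z)`. -/
def C1 {d : ℕ} (A : Fin d → Fin d → Bool) (x y z : Fin d) : Bool :=
  C0 (delNode A z) x y ||
    ((decide (∃ a : Fin d, a ≠ z ∧ C0 (delNode A z) x a = true ∧ ReachF A d a z = true)) &&
     (decide (∃ b : Fin d, b ≠ z ∧ C0 (delNode A z) y b = true ∧ ReachF A d b z = true)))

/-- The soft 1st-order d-separation score `S̃_W^(1)(x,y∣z)`. -/
def softS1 {d : ℕ} (α : ℝ) (W : Fin d → Fin d → ℝ) (x y z : Fin d) : EReal :=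
  softS0 α (delW W z) x y +
    softOr α
      ![∑ a ∈ Finset.univ.erase z,
          softOr α ![softS0 α (delW W z) x a, softUnreach α W d a z],
        ∑ b ∈ Finset.univ.erase z,
          softOr α ![softS0 α (delW W z) y b, softUnreach α W d b z]]

/-- The soft 1st-order d-connection score `C̃_W^(1)(x,y∣z)`. -/
def softC1 {d : ℕ} (α : ℝ) (W : Fin d → Fin d → ℝ) (x y z : Fin d) : EReal :=
  softOr α
    ![softC0 α (delW W z) x y,
      (softOr α (fun a : {a : Fin d // a ≠ z} =>
          softC0 α (delW W z) x a.1 + softReach α W d a.1 z)) +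
      (softOr α (fun b : {b : Fin d // b ≠ z} =>
          softC0 α (delW W z) y b.1 + softReach α W d b.1 z))]

section AuxBasic
open ENNReal EReal

lemma elog_eq_log : elog = ENNReal.log := rfl

lemma eexp_eq_exp : eexp = EReal.exp := by
  funext x
  induction x with
  | bot => rfl
  | coe x => simp [eexp, EReal.exp_coe]
  | top => rfl

lemma softOr_le {ι : Type*} [Fintype ι] {α : ℝ} (hα : 0 < α) {x : ι → EReal} {y : EReal}
    (h : ∀ i, x i ≤ y) : softOr α x ≤ y := by
  rcases isEmpty_or_nonempty ι with hι | hι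
  · have : softOr α x = ⊥ := by
      simp only [softOr, Finset.univ_eq_empty, Finset.sum_empty, Fintype.card_eq_zero,
        Nat.cast_zero, ENNReal.zero_div, elog_eq_log, ENNReal.log_zero]
      exact EReal.coe_mul_bot_of_pos hα
    simp [this]
  · have hc : (0:ℝ) ≤ ((α⁻¹ : ℝ) : EReal) := by
      exact_mod_cast EReal.coe_nonneg.mpr (inv_nonneg.mpr hα.le)
    have hsum : (∑ i, eexp (((α⁻¹ : ℝ) : EReal) * x i)) ≤
        (Fintype.card ι : ℝ≥0∞) * EReal.exp (((α⁻¹ : ℝ) : EReal) * y) := by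
      rw [eexp_eq_exp]
      calc (∑ i, EReal.exp (((α⁻¹ : ℝ) : EReal) * x i))
          ≤ ∑ _i : ι, EReal.exp (((α⁻¹ : ℝ) : EReal) * y) := by
            refine Finset.sum_le_sum fun i _ => ?_
            exact EReal.exp_monotone (mul_le_mul_of_nonneg_left (h i)
              (EReal.coe_nonneg.mpr (inv_nonneg.mpr hα.le)))
        _ = (Fintype.card ι : ℝ≥0∞) * EReal.exp (((α⁻¹ : ℝ) : EReal) * y) := by
            simp [Finset.sum_const, mul_comm]
    have hdiv : (∑ i, eexp (((α⁻¹ : ℝ) : EReal) * x i)) / (Fintype.card ι : ℝ≥0∞) ≤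
        EReal.exp (((α⁻¹ : ℝ) : EReal) * y) := by
      refine le_trans (ENNReal.div_le_div_right hsum _) ?_
      rw [mul_comm, mul_div_assoc, ENNReal.div_self (by exact_mod_cast Fintype.card_ne_zero) (ENNReal.natCast_ne_top _), mul_one]
    have hlog : elog ((∑ i, eexp (((α⁻¹ : ℝ) : EReal) * x i)) / (Fintype.card ι : ℝ≥0∞)) ≤
        ((α⁻¹ : ℝ) : EReal) * y := by
      rw [elog_eq_log]
      calc ENNReal.log ((∑ i, eexp (((α⁻¹ : ℝ) : EReal) * x i)) / (Fintype.card ι : ℝ≥0∞))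
          ≤ ENNReal.log (EReal.exp (((α⁻¹ : ℝ) : EReal) * y)) := ENNReal.log_monotone hdiv
        _ = ((α⁻¹ : ℝ) : EReal) * y := EReal.log_exp _
    calc softOr α x ≤ (α : EReal) * (((α⁻¹ : ℝ) : EReal) * y) :=
          mul_le_mul_of_nonneg_left hlog (EReal.coe_nonneg.mpr hα.le)
      _ = y := by
          induction y with
          | bot =>
            rw [EReal.coe_mul_bot_of_pos (inv_pos.mpr hα), EReal.coe_mul_bot_of_pos hα]
          | coe y =>
            rw [← EReal.coe_mul, ← EReal.coe_mul, ← mul_assoc,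
              mul_inv_cancel₀ hα.ne', one_mul]
          | top =>
            rw [EReal.coe_mul_top_of_pos (inv_pos.mpr hα), EReal.coe_mul_top_of_pos hα]

end AuxBasic

section AuxMeasure
open ENNReal

variable {d : ℕ}

lemma bernoulliMeasure_singleton (p : ℝ) (b : Bool) :
    bernoulliMeasure p {b} = ENNReal.ofReal (if b then p else 1 - p) := by
  cases b <;>
    simp [bernoulliMeasure, Measure.dirac_apply' _ (measurableSet_singleton _)]

lemma isProbability_bernoulliMeasure {p : ℝ} (hp : p ∈ Set.Icc (0:ℝ) 1) :
    IsProbabilityMeasure (bernoulliMeasure p) := by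
  constructor
  have h : bernoulliMeasure p Set.univ = ENNReal.ofReal p + ENNReal.ofReal (1 - p) := by
    simp [bernoulliMeasure]
  rw [h, ← ENNReal.ofReal_add hp.1 (by linarith [hp.2])]
  simp

lemma isProbability_bernMeasure {W : Fin d → Fin d → ℝ}
    (hW : ∀ u v, W u v ∈ Set.Icc (0:ℝ) 1) :
    IsProbabilityMeasure (bernMeasure W) := by
  haveI h1 : ∀ u v, IsProbabilityMeasure (bernoulliMeasure (W u v)) :=
    fun u v => isProbability_bernoulliMeasure (hW u v)
  haveI h2 : ∀ u, IsProbabilityMeasure (Measure.pi fun v => bernoulliMeasure (W u v)) :=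
    fun u => inferInstance
  unfold bernMeasure
  infer_instance

/-- The weight of an atom under the Bernoulli product measure. -/
def wgt (W : Fin d → Fin d → ℝ) (A : Fin d → Fin d → Bool) : ℝ :=
  ∏ u, ∏ v, if A u v then W u v else 1 - W u v

lemma wgt_nonneg {W : Fin d → Fin d → ℝ} (hW : ∀ u v, W u v ∈ Set.Icc (0:ℝ) 1)
    (A : Fin d → Fin d → Bool) : 0 ≤ wgt W A := by
  refine Finset.prod_nonneg fun u _ => Finset.prod_nonneg fun v _ => ?_
  rcases hW u v with ⟨h0, h1⟩
  split <;> linarith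

lemma pi_bern_singleton {p : Fin d → ℝ} (g : Fin d → Bool) :
    Measure.pi (fun v => bernoulliMeasure (p v)) {g}
      = ∏ v, ENNReal.ofReal (if g v then p v else 1 - p v) := by
  have h : ({g} : Set (Fin d → Bool)) = Set.pi Set.univ (fun v => {g v}) := by
    ext f
    simp [Set.mem_pi, funext_iff]
  rw [h, Measure.pi_pi]
  exact Finset.prod_congr rfl fun v _ => bernoulliMeasure_singleton _ _

lemma bernMeasure_singleton {W : Fin d → Fin d → ℝ}
    (hW : ∀ u v, W u v ∈ Set.Icc (0:ℝ) 1) (A : Fin d → Fin d → Bool) :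
    bernMeasure W {A} = ENNReal.ofReal (wgt W A) := by
  have h : ({A} : Set (Fin d → Fin d → Bool)) = Set.pi Set.univ (fun u => {A u}) := by
    ext B
    simp [Set.mem_pi, funext_iff]
  rw [bernMeasure, h, Measure.pi_pi]
  rw [wgt, ENNReal.ofReal_prod_of_nonneg (fun u _ => Finset.prod_nonneg fun v _ => by
    rcases hW u v with ⟨h0, h1⟩; split <;> linarith)]
  refine Finset.prod_congr rfl fun u _ => ?_
  rw [pi_bern_singleton, ENNReal.ofReal_prod_of_nonneg (fun v _ => by
    rcases hW u v with ⟨h0, h1⟩; split <;> linarith)]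

lemma bernMeasure_set {W : Fin d → Fin d → ℝ}
    (hW : ∀ u v, W u v ∈ Set.Icc (0:ℝ) 1) (S : Set (Fin d → Fin d → Bool)) :
    bernMeasure W S = ∑ A ∈ (Set.toFinite S).toFinset, ENNReal.ofReal (wgt W A) := by
  have h : S = ⋃ A ∈ (Set.toFinite S).toFinset, ({A} : Set (Fin d → Fin d → Bool)) := by
    simp [Set.Finite.coe_toFinset]
  conv_lhs => rw [h]
  rw [measure_biUnion_finset]
  · exact Finset.sum_congr rfl fun A _ => bernMeasure_singleton hW A
  · intro a _ b _ hab
    simp [Function.onFun, Set.disjoint_singleton, hab]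
  · exact fun A _ => measurableSet_singleton A

lemma sum_wgt_eq_one {W : Fin d → Fin d → ℝ}
    (hW : ∀ u v, W u v ∈ Set.Icc (0:ℝ) 1) :
    ∑ A : Fin d → Fin d → Bool, wgt W A = 1 := by
  haveI := isProbability_bernMeasure hW
  have h := bernMeasure_set hW Set.univ
  rw [measure_univ] at h
  have h2 : (Set.toFinite (Set.univ : Set (Fin d → Fin d → Bool))).toFinset = Finset.univ := by
    ext A; simp
  rw [h2] at h
  rw [← ENNReal.ofReal_sum_of_nonneg (fun A _ => wgt_nonneg hW A)] at h
  exact (ENNReal.ofReal_eq_one.mp h.symm)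

end AuxMeasure

section AuxHarris
open ENNReal

variable {d : ℕ}

lemma wgt_logmodular (W : Fin d → Fin d → ℝ) (A B : Fin d → Fin d → Bool) :
    wgt W A * wgt W B = wgt W (A ⊓ B) * wgt W (A ⊔ B) := by
  unfold wgt
  rw [← Finset.prod_mul_distrib, ← Finset.prod_mul_distrib]
  refine Finset.prod_congr rfl fun u _ => ?_
  rw [← Finset.prod_mul_distrib, ← Finset.prod_mul_distrib]
  refine Finset.prod_congr rfl fun v _ => ?_
  simp only [Pi.inf_apply, Pi.sup_apply]
  rcases Bool.dichotomy (A u v) with hA | hA <;> rcases Bool.dichotomy (B u v) with hB | hB <;>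
    simp only [hA, hB] <;> norm_num <;> ring

open Classical in
/-- Real-valued indicator of a set. -/
def setInd (S : Set (Fin d → Fin d → Bool)) (A : Fin d → Fin d → Bool) : ℝ :=
  if A ∈ S then 1 else 0

lemma setInd_nonneg' (S : Set (Fin d → Fin d → Bool)) (A) : 0 ≤ setInd S A := by
  unfold setInd; split <;> norm_num

lemma setInd_mul (S T : Set (Fin d → Fin d → Bool)) (A) :
    setInd S A * setInd T A = setInd (S ∩ T) A := by
  unfold setInd
  by_cases hS : A ∈ S <;> by_cases hT : A ∈ T <;> simp [hS, hT]

lemma monotone_setInd {S : Set (Fin d → Fin d → Bool)} (hS : IsUpperSet S) :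
    Monotone (setInd S) := by
  intro A B hAB
  by_cases hA : A ∈ S
  · simp [setInd, hA, hS hAB hA]
  · have : setInd S A = 0 := by simp [setInd, hA]
    rw [this]; exact setInd_nonneg' S B

lemma bernMeasure_eq_ofReal_sum {W : Fin d → Fin d → ℝ}
    (hW : ∀ u v, W u v ∈ Set.Icc (0:ℝ) 1) (S : Set (Fin d → Fin d → Bool)) :
    bernMeasure W S = ENNReal.ofReal (∑ A, wgt W A * setInd S A) := by
  rw [bernMeasure_set hW S]
  rw [← ENNReal.ofReal_sum_of_nonneg (fun A _ => wgt_nonneg hW A)]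
  congr 1
  rw [← Finset.sum_subset (Finset.subset_univ (Set.toFinite S).toFinset)
    (fun A _ hA => ?_)]
  · refine Finset.sum_congr rfl fun A hA => ?_
    have : A ∈ S := by simpa using hA
    simp [setInd, this]
  · have : A ∉ S := by simpa using hA
    simp [setInd, this]

lemma harris_upper {W : Fin d → Fin d → ℝ}
    (hW : ∀ u v, W u v ∈ Set.Icc (0:ℝ) 1) {S T : Set (Fin d → Fin d → Bool)}
    (hS : IsUpperSet S) (hT : IsUpperSet T) :
    bernMeasure W S * bernMeasure W T ≤ bernMeasure W (S ∩ T) := by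
  rw [bernMeasure_eq_ofReal_sum hW S, bernMeasure_eq_ofReal_sum hW T,
    bernMeasure_eq_ofReal_sum hW (S ∩ T),
    ← ENNReal.ofReal_mul (Finset.sum_nonneg fun A _ =>
      mul_nonneg (wgt_nonneg hW A) (setInd_nonneg' S A))]
  refine ENNReal.ofReal_le_ofReal ?_
  have hfkg := fkg (μ := wgt W) (f := setInd S) (g := setInd T)
    (fun A => wgt_nonneg hW A) (fun A => setInd_nonneg' S A) (fun A => setInd_nonneg' T A)
    (monotone_setInd hS) (monotone_setInd hT)
    (fun A B => le_of_eq (wgt_logmodular W A B))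
  rw [sum_wgt_eq_one hW, one_mul] at hfkg
  refine le_trans hfkg (le_of_eq ?_)
  exact Finset.sum_congr rfl fun A _ => by rw [setInd_mul]

lemma harris_lower {W : Fin d → Fin d → ℝ}
    (hW : ∀ u v, W u v ∈ Set.Icc (0:ℝ) 1) {S T : Set (Fin d → Fin d → Bool)}
    (hS : IsLowerSet S) (hT : IsLowerSet T) :
    bernMeasure W S * bernMeasure W T ≤ bernMeasure W (S ∩ T) := by
  rw [bernMeasure_eq_ofReal_sum hW S, bernMeasure_eq_ofReal_sum hW T,
    bernMeasure_eq_ofReal_sum hW (S ∩ T),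
    ← ENNReal.ofReal_mul (Finset.sum_nonneg fun A _ =>
      mul_nonneg (wgt_nonneg hW A) (setInd_nonneg' S A))]
  refine ENNReal.ofReal_le_ofReal ?_
  have hmono : ∀ (U : Set (Fin d → Fin d → Bool)), IsLowerSet U →
      Monotone (fun A : (Fin d → Fin d → Bool)ᵒᵈ => setInd U (OrderDual.ofDual A)) := by
    intro U hU A B hAB
    dsimp only
    by_cases hA : OrderDual.ofDual A ∈ U
    · have hB : OrderDual.ofDual B ∈ U := hU hAB hA
      simp [setInd, hA, hB]
    · have h0 : setInd U (OrderDual.ofDual A) = 0 := by simp [setInd, hA]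
      rw [h0]; exact setInd_nonneg' U _
  have hfkg := fkg (α := (Fin d → Fin d → Bool)ᵒᵈ)
    (μ := fun A => wgt W (OrderDual.ofDual A))
    (f := fun A => setInd S (OrderDual.ofDual A))
    (g := fun A => setInd T (OrderDual.ofDual A))
    (fun A => wgt_nonneg hW _) (fun A => setInd_nonneg' S _) (fun A => setInd_nonneg' T _)
    (hmono S hS) (hmono T hT)
    (fun A B => by
      rw [ofDual_inf, ofDual_sup]
      exact le_of_eq ((wgt_logmodular W _ _).trans (mul_comm _ _)))
  have e1 : (∑ A : (Fin d → Fin d → Bool)ᵒᵈ,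
      wgt W (OrderDual.ofDual A) * setInd S (OrderDual.ofDual A))
      = ∑ A, wgt W A * setInd S A :=
    Fintype.sum_equiv OrderDual.ofDual _ _ fun _ => rfl
  have e2 : (∑ A : (Fin d → Fin d → Bool)ᵒᵈ,
      wgt W (OrderDual.ofDual A) * setInd T (OrderDual.ofDual A))
      = ∑ A, wgt W A * setInd T A :=
    Fintype.sum_equiv OrderDual.ofDual _ _ fun _ => rfl
  have e0 : (∑ A : (Fin d → Fin d → Bool)ᵒᵈ, wgt W (OrderDual.ofDual A)) = ∑ A, wgt W A :=
    Fintype.sum_equiv OrderDual.ofDual _ _ fun _ => rfl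
  have e3 : (∑ A : (Fin d → Fin d → Bool)ᵒᵈ,
      wgt W (OrderDual.ofDual A) * (setInd S (OrderDual.ofDual A) * setInd T (OrderDual.ofDual A)))
      = ∑ A, wgt W A * setInd (S ∩ T) A := by
    refine Fintype.sum_equiv OrderDual.ofDual _ _ fun A => ?_
    rw [setInd_mul]
  rw [e1, e2, e0, e3, sum_wgt_eq_one hW, one_mul] at hfkg
  exact hfkg

end AuxHarris

section AuxLog
open ENNReal

variable {d : ℕ} {W : Fin d → Fin d → ℝ}

lemma elog_le_elog {a b : ℝ≥0∞} (h : a ≤ b) : elog a ≤ elog b := by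
  rw [elog_eq_log]; exact ENNReal.log_monotone h

lemma add_le_elog_inter_upper (hW : ∀ u v, W u v ∈ Set.Icc (0:ℝ) 1)
    {S T : Set (Fin d → Fin d → Bool)} (hS : IsUpperSet S) (hT : IsUpperSet T)
    {s t : EReal} (hs : s ≤ elog (bernMeasure W S)) (ht : t ≤ elog (bernMeasure W T)) :
    s + t ≤ elog (bernMeasure W (S ∩ T)) := by
  calc s + t ≤ elog (bernMeasure W S) + elog (bernMeasure W T) := add_le_add hs ht
    _ = elog (bernMeasure W S * bernMeasure W T) := by
        rw [elog_eq_log, ENNReal.log_mul_add]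
    _ ≤ elog (bernMeasure W (S ∩ T)) := elog_le_elog (harris_upper hW hS hT)

lemma add_le_elog_inter_lower (hW : ∀ u v, W u v ∈ Set.Icc (0:ℝ) 1)
    {S T : Set (Fin d → Fin d → Bool)} (hS : IsLowerSet S) (hT : IsLowerSet T)
    {s t : EReal} (hs : s ≤ elog (bernMeasure W S)) (ht : t ≤ elog (bernMeasure W T)) :
    s + t ≤ elog (bernMeasure W (S ∩ T)) := by
  calc s + t ≤ elog (bernMeasure W S) + elog (bernMeasure W T) := add_le_add hs ht
    _ = elog (bernMeasure W S * bernMeasure W T) := by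
        rw [elog_eq_log, ENNReal.log_mul_add]
    _ ≤ elog (bernMeasure W (S ∩ T)) := elog_le_elog (harris_lower hW hS hT)

lemma sum_le_elog_biInter_lower (hW : ∀ u v, W u v ∈ Set.Icc (0:ℝ) 1)
    {ι : Type*} [DecidableEq ι] (s : Finset ι) (E : ι → Set (Fin d → Fin d → Bool))
    (t : ι → EReal) (hE : ∀ i ∈ s, IsLowerSet (E i))
    (ht : ∀ i ∈ s, t i ≤ elog (bernMeasure W (E i))) :
    ∑ i ∈ s, t i ≤ elog (bernMeasure W (⋂ i ∈ s, E i)) := by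
  haveI := isProbability_bernMeasure hW
  induction s using Finset.induction_on with
  | empty =>
    have : (⋂ i ∈ (∅ : Finset ι), E i) = Set.univ := by simp
    rw [Finset.sum_empty, this, measure_univ, elog_eq_log, ENNReal.log_one]
  | insert a s' ha ih =>
    rw [Finset.set_biInter_insert, Finset.sum_insert ha]
    refine add_le_elog_inter_lower hW (hE a (Finset.mem_insert_self a s')) ?_
      (ht a (Finset.mem_insert_self a s')) ?_
    · exact isLowerSet_iInter₂ fun i => fun hi =>
        hE i (Finset.mem_insert_of_mem hi)
    · exact ih (fun i hi => hE i (Finset.mem_insert_of_mem hi))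
        (fun i hi => ht i (Finset.mem_insert_of_mem hi))

lemma sum_le_elog_biInter_upper (hW : ∀ u v, W u v ∈ Set.Icc (0:ℝ) 1)
    {ι : Type*} [DecidableEq ι] (s : Finset ι) (E : ι → Set (Fin d → Fin d → Bool))
    (t : ι → EReal) (hE : ∀ i ∈ s, IsUpperSet (E i))
    (ht : ∀ i ∈ s, t i ≤ elog (bernMeasure W (E i))) :
    ∑ i ∈ s, t i ≤ elog (bernMeasure W (⋂ i ∈ s, E i)) := by
  haveI := isProbability_bernMeasure hW
  induction s using Finset.induction_on with
  | empty =>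
    have : (⋂ i ∈ (∅ : Finset ι), E i) = Set.univ := by simp
    rw [Finset.sum_empty, this, measure_univ, elog_eq_log, ENNReal.log_one]
  | insert a s' ha ih =>
    rw [Finset.set_biInter_insert, Finset.sum_insert ha]
    refine add_le_elog_inter_upper hW (hE a (Finset.mem_insert_self a s')) ?_
      (ht a (Finset.mem_insert_self a s')) ?_
    · exact isUpperSet_iInter₂ fun i => fun hi =>
        hE i (Finset.mem_insert_of_mem hi)
    · exact ih (fun i hi => hE i (Finset.mem_insert_of_mem hi))
        (fun i hi => ht i (Finset.mem_insert_of_mem hi))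

end AuxLog

section AuxMono

variable {d : ℕ}

lemma reachF_mono (l : ℕ) (x y : Fin d) :
    Monotone fun A : Fin d → Fin d → Bool => ReachF A l x y := by
  induction l generalizing y with
  | zero => exact monotone_const
  | succ l ih =>
    intro A B hAB
    rw [Bool.le_iff_imp]
    intro h
    simp only [ReachF, Bool.or_eq_true, decide_eq_true_eq] at h ⊢
    rcases h with ⟨u, hu1, hu2⟩ | h
    · exact Or.inl ⟨u, Bool.le_iff_imp.mp (ih u hAB) hu1, Bool.le_iff_imp.mp (hAB u y) hu2⟩
    · exact Or.inr (Bool.le_iff_imp.mp (ih y hAB) h)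

lemma c0_mono (x y : Fin d) : Monotone fun A : Fin d → Fin d → Bool => C0 A x y := by
  intro A B hAB
  rw [Bool.le_iff_imp]
  intro h
  simp only [C0, decide_eq_true_eq] at h ⊢
  rcases h with ⟨a, h1, h2⟩
  exact ⟨a, Bool.le_iff_imp.mp (reachF_mono d a x hAB) h1,
    Bool.le_iff_imp.mp (reachF_mono d a y hAB) h2⟩

lemma isUpperSet_eventTrue {f : (Fin d → Fin d → Bool) → Bool} (hf : Monotone f) :
    IsUpperSet {A | f A = true} := fun A B hAB hA =>
  Bool.le_iff_imp.mp (hf hAB) hA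

lemma isLowerSet_eventFalse {f : (Fin d → Fin d → Bool) → Bool} (hf : Monotone f) :
    IsLowerSet {A | f A = false} := by
  intro A B hBA hA
  have h := hf hBA
  rw [Bool.le_iff_imp] at h
  simp only [Set.mem_setOf_eq] at hA ⊢
  cases hb : f B
  · rfl
  · rw [h hb] at hA; exact hA

lemma reachF_le_succ {A : Fin d → Fin d → Bool} {l : ℕ} {x y : Fin d}
    (h : ReachF A l x y = true) : ReachF A (l + 1) x y = true := by
  simp only [ReachF, Bool.or_eq_true, decide_eq_true_eq]
  exact Or.inr h

end AuxMono

section AuxCoord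
open ENNReal

variable {d : ℕ}

lemma pi_bern_coord {p : Fin d → ℝ} (hp : ∀ v, p v ∈ Set.Icc (0:ℝ) 1) (v : Fin d) (b : Bool) :
    Measure.pi (fun v' => bernoulliMeasure (p v')) {g : Fin d → Bool | g v = b}
      = ENNReal.ofReal (if b then p v else 1 - p v) := by
  classical
  haveI : ∀ v', IsProbabilityMeasure (bernoulliMeasure (p v')) :=
    fun v' => isProbability_bernoulliMeasure (hp v')
  have h : {g : Fin d → Bool | g v = b}
      = Set.pi Set.univ (fun v' => if v' = v then {b} else Set.univ) := by
    ext g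
    simp only [Set.mem_setOf_eq, Set.mem_pi, Set.mem_univ, true_implies]
    constructor
    · intro hg v'
      by_cases hv : v' = v
      · subst hv; simp [hg]
      · simp [hv]
    · intro hg
      have := hg v
      simpa using this
  rw [h, Measure.pi_pi]
  rw [Finset.prod_eq_single v (fun v' _ hv => by rw [if_neg hv]; exact measure_univ)
    (by simp)]
  simp [bernoulliMeasure_singleton]

lemma bernMeasure_coord {W : Fin d → Fin d → ℝ} (hW : ∀ u v, W u v ∈ Set.Icc (0:ℝ) 1)
    (u v : Fin d) (b : Bool) :
    bernMeasure W {A : Fin d → Fin d → Bool | A u v = b}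
      = ENNReal.ofReal (if b then W u v else 1 - W u v) := by
  classical
  haveI : ∀ u' v', IsProbabilityMeasure (bernoulliMeasure (W u' v')) :=
    fun u' v' => isProbability_bernoulliMeasure (hW u' v')
  haveI : ∀ u', IsProbabilityMeasure (Measure.pi fun v' => bernoulliMeasure (W u' v')) :=
    fun _ => inferInstance
  have h : {A : Fin d → Fin d → Bool | A u v = b}
      = Set.pi Set.univ (fun u' => if u' = u then {g : Fin d → Bool | g v = b} else Set.univ) := by
    ext A
    simp only [Set.mem_setOf_eq, Set.mem_pi, Set.mem_univ, true_implies]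
    constructor
    · intro hA u'
      by_cases hu : u' = u
      · subst hu; simp [hA]
      · simp [hu]
    · intro hA
      have := hA u
      simpa using this
  rw [bernMeasure, h, Measure.pi_pi]
  rw [Finset.prod_eq_single u (fun u' _ hu => by rw [if_neg hu]; exact measure_univ)
    (by simp)]
  simp only [if_pos rfl]
  exact pi_bern_coord (hW u) v b

/-- The abstract framework: `D` is a monotone graph transformation whose coordinate
marginals under `Bern(W)` are Bernoulli with parameters `W'`. -/
structure GoodDel {d : ℕ} (W : Fin d → Fin d → ℝ)
    (D : (Fin d → Fin d → Bool) → (Fin d → Fin d → Bool)) (W' : Fin d → Fin d → ℝ) : Prop where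
  mono : Monotone D
  ptrue : ∀ u v, bernMeasure W {A | D A u v = true} = ENNReal.ofReal (W' u v)
  pfalse : ∀ u v, bernMeasure W {A | D A u v = false} = ENNReal.ofReal (1 - W' u v)

lemma goodDel_id {W : Fin d → Fin d → ℝ} (hW : ∀ u v, W u v ∈ Set.Icc (0:ℝ) 1) :
    GoodDel W id W := by
  refine ⟨monotone_id, fun u v => ?_, fun u v => ?_⟩
  · simpa using bernMeasure_coord hW u v true
  · simpa using bernMeasure_coord hW u v false

lemma goodDel_delNode {W : Fin d → Fin d → ℝ} (hW : ∀ u v, W u v ∈ Set.Icc (0:ℝ) 1)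
    (z : Fin d) : GoodDel W (fun A => delNode A z) (delW W z) := by
  haveI := isProbability_bernMeasure hW
  refine ⟨?_, fun u v => ?_, fun u v => ?_⟩
  · intro A B hAB u v
    rw [Bool.le_iff_imp]
    intro h
    simp only [delNode, Bool.and_eq_true, decide_eq_true_eq] at h ⊢
    exact ⟨⟨Bool.le_iff_imp.mp (hAB u v) h.1.1, h.1.2⟩, h.2⟩
  · by_cases huv : u ≠ z ∧ v ≠ z
    · have h : {A : Fin d → Fin d → Bool | delNode A z u v = true}
          = {A : Fin d → Fin d → Bool | A u v = true} := by
        ext A; simp [delNode, huv.1, huv.2]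
      rw [h, delW, if_pos huv]
      simpa using bernMeasure_coord hW u v true
    · have h : {A : Fin d → Fin d → Bool | delNode A z u v = true} = (∅ : Set _) := by
        ext A
        simp only [delNode, Bool.and_eq_true, decide_eq_true_eq, Set.mem_setOf_eq,
          Set.mem_empty_iff_false, iff_false]
        intro hc
        exact huv ⟨hc.1.2, hc.2⟩
      rw [h, delW, if_neg huv, measure_empty]
      simp
  · by_cases huv : u ≠ z ∧ v ≠ z
    · have h : {A : Fin d → Fin d → Bool | delNode A z u v = false}
          = {A : Fin d → Fin d → Bool | A u v = false} := by
        ext A; simp [delNode, huv.1, huv.2]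
      rw [h, delW, if_pos huv]
      simpa using bernMeasure_coord hW u v false
    · have h : {A : Fin d → Fin d → Bool | delNode A z u v = false} = Set.univ := by
        ext A
        simp only [Set.mem_setOf_eq, Set.mem_univ, iff_true, delNode]
        rcases not_and_or.mp huv with hu | hv
        · simp [Ne, not_not.mp hu]
        · simp [Ne, not_not.mp hv]
      rw [h, delW, if_neg huv, measure_univ]
      norm_num

end AuxCoord

section MainInd
open ENNReal

variable {d : ℕ} {W W' : Fin d → Fin d → ℝ}
  {D : (Fin d → Fin d → Bool) → (Fin d → Fin d → Bool)} {α : ℝ}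

lemma monoD_coord (hG : GoodDel W D W') (u v : Fin d) :
    Monotone fun A => D A u v :=
  fun A B hAB => (hG.mono hAB) u v

lemma monoD_reach (hG : GoodDel W D W') (l : ℕ) (x y : Fin d) :
    Monotone fun A => ReachF (D A) l x y :=
  (reachF_mono l x y).comp hG.mono

lemma monoD_c0 (hG : GoodDel W D W') (x y : Fin d) :
    Monotone fun A => C0 (D A) x y :=
  (c0_mono x y).comp hG.mono

lemma softReach_le (hW : ∀ u v, W u v ∈ Set.Icc (0:ℝ) 1) (hα : 0 < α)
    (hG : GoodDel W D W') (l : ℕ) (x y : Fin d) :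
    softReach α W' l x y ≤ elog (bernMeasure W {A | ReachF (D A) l x y = true}) := by
  haveI := isProbability_bernMeasure hW
  induction l generalizing y with
  | zero =>
    by_cases hxy : x = y
    · subst hxy
      have h : {A : Fin d → Fin d → Bool | ReachF (D A) 0 x x = true} = Set.univ := by
        ext A; simp [ReachF]
      rw [h, measure_univ, elog_eq_log, ENNReal.log_one]
      simp [softReach]
    · simp [softReach, hxy]
  | succ l ih =>
    simp only [softReach]
    refine softOr_le hα fun i => ?_
    refine Fin.cases ?_ ?_ i
    · rw [Fin.cons_zero]
      refine le_trans (ih y) (elog_le_elog (measure_mono fun A hA => ?_))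
      exact reachF_le_succ hA
    · intro u
      rw [Fin.cons_succ]
      have h2 : elog (ENNReal.ofReal (W' u y))
          ≤ elog (bernMeasure W {A | D A u y = true}) := by
        rw [hG.ptrue u y]
      refine le_trans (add_le_elog_inter_upper hW
        (isUpperSet_eventTrue (monoD_reach hG l x u))
        (isUpperSet_eventTrue (monoD_coord hG u y)) (ih u) h2)
        (elog_le_elog (measure_mono fun A hA => ?_))
      obtain ⟨h1, h2'⟩ := hA
      simp only [Set.mem_setOf_eq, ReachF, Bool.or_eq_true, decide_eq_true_eq]
      exact Or.inl ⟨u, h1, h2'⟩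

lemma softUnreach_le (hW : ∀ u v, W u v ∈ Set.Icc (0:ℝ) 1) (hα : 0 < α)
    (hG : GoodDel W D W') (l : ℕ) (x y : Fin d) :
    softUnreach α W' l x y ≤ elog (bernMeasure W {A | ReachF (D A) l x y = false}) := by
  haveI := isProbability_bernMeasure hW
  induction l generalizing y with
  | zero =>
    by_cases hxy : x = y
    · subst hxy; simp [softUnreach]
    · have h : {A : Fin d → Fin d → Bool | ReachF (D A) 0 x y = false} = Set.univ := by
        ext A; simp [ReachF, hxy]
      rw [h, measure_univ, elog_eq_log, ENNReal.log_one]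
      simp [softUnreach, hxy]
  | succ l ih =>
    simp only [softUnreach]
    set G : Fin d → Set (Fin d → Fin d → Bool) :=
      fun u => {A | ReachF (D A) l x u = false} ∪ {A | D A u y = false} with hGdef
    have hGlower : ∀ u, IsLowerSet (G u) := fun u =>
      (isLowerSet_eventFalse (monoD_reach hG l x u)).union
        (isLowerSet_eventFalse (monoD_coord hG u y))
    have hsum : ∑ u : Fin d,
        softOr α ![softUnreach α W' l x u, elog (ENNReal.ofReal (1 - W' u y))]
        ≤ elog (bernMeasure W (⋂ u ∈ Finset.univ, G u)) := by
      refine sum_le_elog_biInter_lower hW Finset.univ G _ (fun u _ => hGlower u)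
        (fun u _ => ?_)
      refine softOr_le hα fun i => ?_
      fin_cases i
      · simpa using le_trans (ih u)
          (elog_le_elog (measure_mono Set.subset_union_left))
      · have : elog (ENNReal.ofReal (1 - W' u y))
            = elog (bernMeasure W {A | D A u y = false}) := by rw [hG.pfalse u y]
        simpa using le_trans (le_of_eq this)
          (elog_le_elog (measure_mono Set.subset_union_right))
    refine le_trans (add_le_elog_inter_lower hW ?_
      (isLowerSet_eventFalse (monoD_reach hG l x y)) hsum (ih y))
      (elog_le_elog (measure_mono fun A hA => ?_))
    · exact isLowerSet_iInter₂ fun u _ => hGlower u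
    · obtain ⟨hAll, hR⟩ := hA
      simp only [Set.mem_iInter] at hAll
      simp only [Set.mem_setOf_eq] at hR ⊢
      simp only [ReachF, Bool.or_eq_false_iff, decide_eq_false_iff_not]
      refine ⟨?_, hR⟩
      rintro ⟨u, hu1, hu2⟩
      rcases hAll u (Finset.mem_univ u) with h | h
      · rw [Set.mem_setOf_eq.mp h] at hu1; exact Bool.false_ne_true hu1
      · rw [Set.mem_setOf_eq.mp h] at hu2; exact Bool.false_ne_true hu2

lemma softC0_le (hW : ∀ u v, W u v ∈ Set.Icc (0:ℝ) 1) (hα : 0 < α)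
    (hG : GoodDel W D W') (x y : Fin d) :
    softC0 α W' x y ≤ elog (bernMeasure W {A | C0 (D A) x y = true}) := by
  unfold softC0
  refine softOr_le hα fun a => ?_
  refine le_trans (add_le_elog_inter_upper hW
    (isUpperSet_eventTrue (monoD_reach hG d a x))
    (isUpperSet_eventTrue (monoD_reach hG d a y))
    (softReach_le hW hα hG d a x) (softReach_le hW hα hG d a y))
    (elog_le_elog (measure_mono fun A hA => ?_))
  obtain ⟨h1, h2⟩ := hA
  simp only [Set.mem_setOf_eq, C0, decide_eq_true_eq]
  exact ⟨a, h1, h2⟩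

lemma softS0_le (hW : ∀ u v, W u v ∈ Set.Icc (0:ℝ) 1) (hα : 0 < α)
    (hG : GoodDel W D W') (x y : Fin d) :
    softS0 α W' x y ≤ elog (bernMeasure W {A | C0 (D A) x y = false}) := by
  unfold softS0
  set G : Fin d → Set (Fin d → Fin d → Bool) :=
    fun a => {A | ReachF (D A) d a x = false} ∪ {A | ReachF (D A) d a y = false} with hGdef
  have hGlower : ∀ a, IsLowerSet (G a) := fun a =>
    (isLowerSet_eventFalse (monoD_reach hG d a x)).union
      (isLowerSet_eventFalse (monoD_reach hG d a y))
  have hsum : ∑ a : Fin d, softOr α ![softUnreach α W' d a x, softUnreach α W' d a y]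
      ≤ elog (bernMeasure W (⋂ a ∈ Finset.univ, G a)) := by
    refine sum_le_elog_biInter_lower hW Finset.univ G _ (fun a _ => hGlower a)
      (fun a _ => ?_)
    refine softOr_le hα fun i => ?_
    fin_cases i
    · simpa using le_trans (softUnreach_le hW hα hG d a x)
        (elog_le_elog (measure_mono Set.subset_union_left))
    · simpa using le_trans (softUnreach_le hW hα hG d a y)
        (elog_le_elog (measure_mono Set.subset_union_right))
  refine le_trans hsum (elog_le_elog (measure_mono fun A hA => ?_))
  simp only [Set.mem_iInter] at hA
  simp only [Set.mem_setOf_eq, C0, decide_eq_false_iff_not]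
  rintro ⟨a, ha1, ha2⟩
  rcases hA a (Finset.mem_univ a) with h | h
  · rw [Set.mem_setOf_eq.mp h] at ha1; exact Bool.false_ne_true ha1
  · rw [Set.mem_setOf_eq.mp h] at ha2; exact Bool.false_ne_true ha2

end MainInd

/-- Theorem 3.7, 1st-order inequalities: the soft 1st-order d-separation and
d-connection scores lower-bound the logarithms of the expected indicators
`S_A^(1)(x,y∣z) = 1 − C_A^(1)(x,y∣z)` and `C_A^(1)(x,y∣z)` under `Bern(W)`. -/
theorem soft1_le_log_expectation {d : ℕ} (W : Fin d → Fin d → ℝ)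
    (hW : ∀ u v, W u v ∈ Set.Icc (0 : ℝ) 1) (α : ℝ) (hα : α ∈ Set.Ioc (0 : ℝ) 1)
    (x y z : Fin d) :
    softS1 α W x y z ≤
      elog (∫⁻ A, (if C1 A x y z = true then 0 else 1) ∂ bernMeasure W) ∧
    softC1 α W x y z ≤
      elog (∫⁻ A, (if C1 A x y z = true then 1 else 0) ∂ bernMeasure W) := by
  obtain ⟨hα0, hα1⟩ := hα
  haveI := isProbability_bernMeasure hW
  have hGz := goodDel_delNode hW z
  have hGid := goodDel_id hW
  set N0 : Fin d → Fin d → Set (Fin d → Fin d → Bool) :=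
    fun x' y' => {A | C0 (delNode A z) x' y' = false} with hN0
  set P0 : Fin d → Fin d → Set (Fin d → Fin d → Bool) :=
    fun x' y' => {A | C0 (delNode A z) x' y' = true} with hP0
  set Rz : Fin d → Set (Fin d → Fin d → Bool) :=
    fun a => {A | ReachF A d a z = true} with hRz
  set Nz : Fin d → Set (Fin d → Fin d → Bool) :=
    fun a => {A | ReachF A d a z = false} with hNz
  have hN0lower : ∀ x' y', IsLowerSet (N0 x' y') := fun x' y' =>
    isLowerSet_eventFalse (monoD_c0 hGz x' y')
  have hP0upper : ∀ x' y', IsUpperSet (P0 x' y') := fun x' y' =>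
    isUpperSet_eventTrue (monoD_c0 hGz x' y')
  have hRzupper : ∀ a, IsUpperSet (Rz a) := fun a =>
    isUpperSet_eventTrue (reachF_mono d a z)
  have hNzlower : ∀ a, IsLowerSet (Nz a) := fun a =>
    isLowerSet_eventFalse (reachF_mono d a z)
  have hsoftS0 : ∀ x' y', softS0 α (delW W z) x' y' ≤ elog (bernMeasure W (N0 x' y')) :=
    fun x' y' => softS0_le hW hα0 hGz x' y'
  have hsoftC0 : ∀ x' y', softC0 α (delW W z) x' y' ≤ elog (bernMeasure W (P0 x' y')) :=
    fun x' y' => softC0_le hW hα0 hGz x' y'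
  have hsoftR : ∀ a, softReach α W d a z ≤ elog (bernMeasure W (Rz a)) :=
    fun a => softReach_le hW hα0 hGid d a z
  have hsoftU : ∀ a, softUnreach α W d a z ≤ elog (bernMeasure W (Nz a)) :=
    fun a => softUnreach_le hW hα0 hGid d a z
  constructor
  · -- S side
    have hint : (∫⁻ A, (if C1 A x y z = true then (0:ℝ≥0∞) else 1) ∂ bernMeasure W)
        = bernMeasure W {A | C1 A x y z = false} := by
      rw [← MeasureTheory.lintegral_indicator_one
        (Set.toFinite {A | C1 A x y z = false}).measurableSet]
      congr 1
      funext A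
      rcases Bool.dichotomy (C1 A x y z) with h | h <;>
        simp [Set.indicator, h]
    rw [hint]
    set FA : Fin d → Set (Fin d → Fin d → Bool) :=
      fun x' => ⋂ a ∈ Finset.univ.erase z, (N0 x' a ∪ Nz a) with hFA
    have hFAlower : ∀ x', IsLowerSet (FA x') := fun x' =>
      isLowerSet_iInter₂ fun a _ => (hN0lower x' a).union (hNzlower a)
    have hFAle : ∀ x', (∑ a ∈ Finset.univ.erase z,
        softOr α ![softS0 α (delW W z) x' a, softUnreach α W d a z])
        ≤ elog (bernMeasure W (FA x')) := by
      intro x'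
      refine sum_le_elog_biInter_lower hW _ _ _
        (fun a _ => (hN0lower x' a).union (hNzlower a)) (fun a _ => ?_)
      refine softOr_le hα0 fun i => ?_
      fin_cases i
      · simpa using le_trans (hsoftS0 x' a)
          (elog_le_elog (measure_mono Set.subset_union_left))
      · simpa using le_trans (hsoftU a)
          (elog_le_elog (measure_mono Set.subset_union_right))
    have hbr : softOr α
        ![∑ a ∈ Finset.univ.erase z,
            softOr α ![softS0 α (delW W z) x a, softUnreach α W d a z],
          ∑ b ∈ Finset.univ.erase z,
            softOr α ![softS0 α (delW W z) y b, softUnreach α W d b z]]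
        ≤ elog (bernMeasure W (FA x ∪ FA y)) := by
      refine softOr_le hα0 fun i => ?_
      fin_cases i
      · simpa using le_trans (hFAle x)
          (elog_le_elog (measure_mono Set.subset_union_left))
      · simpa using le_trans (hFAle y)
          (elog_le_elog (measure_mono Set.subset_union_right))
    unfold softS1
    refine le_trans (add_le_elog_inter_lower hW (hN0lower x y)
      ((hFAlower x).union (hFAlower y)) (hsoftS0 x y) hbr)
      (elog_le_elog (measure_mono fun A hA => ?_))
    obtain ⟨hA0, hAun⟩ := hA
    have hA0' : C0 (delNode A z) x y = false := hA0
    simp only [Set.mem_setOf_eq, C1, Bool.or_eq_false_iff]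
    refine ⟨hA0', ?_⟩
    have hdec : ∀ x' : Fin d, A ∈ FA x' →
        decide (∃ a, a ≠ z ∧ C0 (delNode A z) x' a = true ∧ ReachF A d a z = true)
          = false := by
      intro x' hAx
      rw [decide_eq_false_iff_not]
      rintro ⟨a, ha, hc, hr⟩
      have hmem : a ∈ Finset.univ.erase z := Finset.mem_erase.mpr ⟨ha, Finset.mem_univ a⟩
      have hGa := Set.mem_iInter₂.mp hAx a hmem
      rcases hGa with h | h
      · have : C0 (delNode A z) x' a = false := h
        rw [this] at hc; exact Bool.false_ne_true hc
      · have : ReachF A d a z = false := h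
        rw [this] at hr; exact Bool.false_ne_true hr
    rcases hAun with h | h
    · rw [hdec x h, Bool.false_and]
    · rw [hdec y h, Bool.and_false]
  · -- C side
    have hint : (∫⁻ A, (if C1 A x y z = true then (1:ℝ≥0∞) else 0) ∂ bernMeasure W)
        = bernMeasure W {A | C1 A x y z = true} := by
      rw [← MeasureTheory.lintegral_indicator_one
        (Set.toFinite {A | C1 A x y z = true}).measurableSet]
      congr 1
      funext A
      rcases Bool.dichotomy (C1 A x y z) with h | h <;>
        simp [Set.indicator, h]
    rw [hint]
    set EA : Fin d → Set (Fin d → Fin d → Bool) :=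
      fun x' => ⋃ a ∈ Finset.univ.erase z, (P0 x' a ∩ Rz a) with hEA
    have hEAupper : ∀ x', IsUpperSet (EA x') := fun x' =>
      isUpperSet_iUnion₂ fun a _ => (hP0upper x' a).inter (hRzupper a)
    have hEAle : ∀ x', (softOr α fun a : {a : Fin d // a ≠ z} =>
        softC0 α (delW W z) x' a.1 + softReach α W d a.1 z)
        ≤ elog (bernMeasure W (EA x')) := by
      intro x'
      refine softOr_le hα0 fun a => ?_
      refine le_trans (add_le_elog_inter_upper hW (hP0upper x' a.1) (hRzupper a.1)
        (hsoftC0 x' a.1) (hsoftR a.1)) (elog_le_elog (measure_mono fun A hA => ?_))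
      exact Set.mem_iUnion₂.mpr
        ⟨a.1, Finset.mem_erase.mpr ⟨a.2, Finset.mem_univ a.1⟩, hA⟩
    have hb1 : softC0 α (delW W z) x y ≤ elog (bernMeasure W {A | C1 A x y z = true}) := by
      refine le_trans (hsoftC0 x y) (elog_le_elog (measure_mono fun A hA => ?_))
      have hA' : C0 (delNode A z) x y = true := hA
      simp only [Set.mem_setOf_eq, C1, Bool.or_eq_true]
      exact Or.inl hA'
    have hb2 : (softOr α fun a : {a : Fin d // a ≠ z} =>
          softC0 α (delW W z) x a.1 + softReach α W d a.1 z) +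
        (softOr α fun b : {b : Fin d // b ≠ z} =>
          softC0 α (delW W z) y b.1 + softReach α W d b.1 z)
        ≤ elog (bernMeasure W {A | C1 A x y z = true}) := by
      refine le_trans (add_le_elog_inter_upper hW (hEAupper x) (hEAupper y)
        (hEAle x) (hEAle y)) (elog_le_elog (measure_mono fun A hA => ?_))
      obtain ⟨hAx, hAy⟩ := hA
      simp only [Set.mem_setOf_eq, C1, Bool.or_eq_true, Bool.and_eq_true,
        decide_eq_true_eq]
      refine Or.inr ⟨?_, ?_⟩
      · obtain ⟨a, hamem, hPa, hRa⟩ := Set.mem_iUnion₂.mp hAx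
        exact ⟨a, (Finset.mem_erase.mp hamem).1, hPa, hRa⟩
      · obtain ⟨b, hbmem, hPb, hRb⟩ := Set.mem_iUnion₂.mp hAy
        exact ⟨b, (Finset.mem_erase.mp hbmem).1, hPb, hRb⟩
    unfold softC1
    refine softOr_le hα0 fun i => ?_
    fin_cases i
    · simpa using hb1
    · simpa using hb2

end
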